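/- Let v_0, v_1, …, v_T be unit vectors in a complex inner product space. Then √(1 − |⟨v_0, v_T⟩|²) ≤ ∑_{t=1}^{T} √(1 − |⟨v_{t−1}, v_t⟩|²). -/

import Mathlib

lemma sine_real_key (x y z s₁ s₂ : ℝ) (hx : 0 ≤ x) (hy : 0 ≤ y) (hz : 0 ≤ z)
    (hs₁ : 0 ≤ s₁) (hs₂ : 0 ≤ s₂)
    (h₁ : s₁ ^ 2 = 1 - x ^ 2) (h₂ : s₂ ^ 2 = 1 - y ^ 2)
    (hzb : x * y - s₁ * s₂ ≤ z) :
    Real.sqrt (1 - z ^ 2) ≤ s₁ + s₂ := by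
  have hx1 : x ≤ 1 := by nlinarith [sq_nonneg s₁]
  have hy1 : y ≤ 1 := by nlinarith [sq_nonneg s₂]
  have hle : 1 - z ^ 2 ≤ (s₁ + s₂) ^ 2 := by
    rcases le_or_gt (x * y) (s₁ * s₂) with h | h
    · nlinarith [sq_nonneg z, mul_nonneg hx hy, mul_nonneg (sub_nonneg.2 hx1) hy,
        mul_nonneg (sub_nonneg.2 hy1) hx]
    · have hz2 : (x * y - s₁ * s₂) ^ 2 ≤ z ^ 2 := by
        have h0 : 0 ≤ x * y - s₁ * s₂ := by linarith
        nlinarith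
      nlinarith [mul_nonneg (mul_nonneg hs₁ hs₂) (sub_nonneg.2 (mul_le_one₀ hx1 hy hy1)),
        mul_nonneg hs₁ hs₂]
  calc Real.sqrt (1 - z ^ 2) ≤ Real.sqrt ((s₁ + s₂) ^ 2) := Real.sqrt_le_sqrt hle
  _ = s₁ + s₂ := Real.sqrt_sq (by positivity)

lemma sine_inner_key {E : Type*} [NormedAddCommGroup E] [InnerProductSpace ℂ E]
    (a b c : E) (ha : ‖a‖ = 1) (hb : ‖b‖ = 1) (hc : ‖c‖ = 1) :
    Real.sqrt (1 - ‖(inner ℂ a c : ℂ)‖ ^ 2) ≤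
      Real.sqrt (1 - ‖(inner ℂ a b : ℂ)‖ ^ 2) +
        Real.sqrt (1 - ‖(inner ℂ b c : ℂ)‖ ^ 2) := by
  set α : ℂ := inner ℂ b a with hα
  set β : ℂ := inner ℂ b c with hβ
  set a' : E := a - α • b with ha'
  set c' : E := c - β • b with hc'
  have hbb : (inner ℂ b b : ℂ) = 1 := by
    rw [inner_self_eq_norm_sq_to_K, hb]; norm_num
  have hab : (inner ℂ a b : ℂ) = (starRingEnd ℂ) α := (inner_conj_symm a b).symm
  have hcb : (inner ℂ c b : ℂ) = (starRingEnd ℂ) β := (inner_conj_symm c b).symm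
  have hna : ‖a'‖ ^ 2 = 1 - ‖α‖ ^ 2 := by
    have h := @norm_sub_sq ℂ E _ _ _ a (α • b)
    rw [ha', h, inner_smul_right, hab, norm_smul, hb, ha]
    simp [Complex.mul_conj', Complex.normSq_eq_norm_sq]
    rw [← Complex.ofReal_pow, Complex.ofReal_re]; ring
  have hnc : ‖c'‖ ^ 2 = 1 - ‖β‖ ^ 2 := by
    have h := @norm_sub_sq ℂ E _ _ _ c (β • b)
    rw [hc', h, inner_smul_right, hcb, norm_smul, hb, hc]
    simp [Complex.mul_conj', Complex.normSq_eq_norm_sq]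
    rw [← Complex.ofReal_pow, Complex.ofReal_re]; ring
  have hdec : (inner ℂ a c : ℂ) = (starRingEnd ℂ) α * β + inner ℂ a' c' := by
    rw [ha', hc']
    simp only [inner_sub_left, inner_sub_right, inner_smul_left, inner_smul_right,
      hbb, hab, hcb, hα, hβ]
    ring
  have hcs : ‖(inner ℂ a' c' : ℂ)‖ ≤ ‖a'‖ * ‖c'‖ := by
    exact norm_inner_le_norm a' c'
  have hlow : ‖α‖ * ‖β‖ - ‖a'‖ * ‖c'‖ ≤
      ‖(inner ℂ a c : ℂ)‖ := by
    rw [hdec]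
    have h1 : ‖(starRingEnd ℂ) α * β‖ - ‖(inner ℂ a' c' : ℂ)‖ ≤
        ‖(starRingEnd ℂ) α * β + inner ℂ a' c'‖ := by
      have := norm_sub_norm_le ((starRingEnd ℂ) α * β) (-(inner ℂ a' c' : ℂ))
      simpa [sub_neg_eq_add] using this
    have h2 : ‖(starRingEnd ℂ) α * β‖ = ‖α‖ * ‖β‖ := by
      simp [map_mul]
    calc ‖α‖ * ‖β‖ - ‖a'‖ * ‖c'‖
        ≤ ‖(starRingEnd ℂ) α * β‖ - ‖(inner ℂ a' c' : ℂ)‖ := by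
          rw [h2]; linarith
      _ ≤ _ := h1
  have hsa : Real.sqrt (1 - ‖(inner ℂ a b : ℂ)‖ ^ 2) = ‖a'‖ := by
    rw [hab, Complex.norm_conj, ← hna, Real.sqrt_sq (norm_nonneg _)]
  have hsc : Real.sqrt (1 - ‖(inner ℂ b c : ℂ)‖ ^ 2) = ‖c'‖ := by
    rw [← hβ, ← hnc, Real.sqrt_sq (norm_nonneg _)]
  rw [hsa, hsc]
  exact sine_real_key (‖α‖) (‖β‖) (‖(inner ℂ a c : ℂ)‖)
    ‖a'‖ ‖c'‖ (norm_nonneg _) (norm_nonneg _) (norm_nonneg _)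
    (norm_nonneg _) (norm_nonneg _) hna hnc hlow


theorem sineChain {E : Type*} [NormedAddCommGroup E] [InnerProductSpace ℂ E]
    (T : ℕ) (v : Fin (T + 1) → E) (hv : ∀ t, ‖v t‖ = 1) :
    Real.sqrt (1 - ‖(inner ℂ (v 0) (v (Fin.last T)) : ℂ)‖ ^ 2) ≤
      ∑ t : Fin T,
        Real.sqrt (1 - ‖(inner ℂ (v t.castSucc) (v t.succ) : ℂ)‖ ^ 2) := by
  induction T with
  | zero =>
    have h0 : (Fin.last 0 : Fin 1) = 0 := rfl
    rw [h0]
    have h1 : (inner ℂ (v 0) (v 0) : ℂ) = 1 := by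
      rw [inner_self_eq_norm_sq_to_K, hv 0]; norm_num
    rw [h1]; simp
  | succ T ih =>
    have h1 := ih (fun i => v i.castSucc) (fun t => hv _)
    simp only [Fin.castSucc_zero] at h1
    rw [Fin.sum_univ_castSucc]
    have h2 := sine_inner_key (v 0) (v ((Fin.last T).castSucc)) (v (Fin.last (T + 1)))
      (hv _) (hv _) (hv _)
    rw [← Fin.succ_last] at h2
    refine le_trans h2 ?_
    gcongr
    · refine le_trans h1 ?_
      apply le_of_eq
      apply Finset.sum_congr rfl
      intro t _
      simp
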